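/- Let Σ₀ be a p×p matrix, δ ∈ ℝ^p, t_{p+1} ∈ ℝ with 1 + t_{p+1} ≠ 0, T_p = diag(t_1,…,t_p), and Σ = [[Σ₀ + δδᵀ, δ],[δᵀ, 1]] the (p+1)×(p+1) block matrix, T = diag(t_1,…,t_{p+1}). If I_p + Σ₀T_p is invertible, then det(I_{p+1} + ΣT) = det(I_p + Σ₀T_p) · (1 + t_{p+1} + δᵀ T_p (I_p + Σ₀T_p)^{-1} δ). -/

import Mathlib

open Matrix

theorem stmt14 {p : ℕ} (S0 : Matrix (Fin p) (Fin p) ℝ) (δ : Fin p → ℝ)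
    (t : Fin p → ℝ) (tlast : ℝ) (htlast : 1 + tlast ≠ 0)
    (Tp : Matrix (Fin p) (Fin p) ℝ) (hTp : Tp = Matrix.diagonal t)
    (S : Matrix (Fin p ⊕ Unit) (Fin p ⊕ Unit) ℝ)
    (hS : S = Matrix.fromBlocks (S0 + Matrix.vecMulVec δ δ) (Matrix.replicateCol Unit δ)
        (Matrix.replicateRow Unit δ) 1)
    (T : Matrix (Fin p ⊕ Unit) (Fin p ⊕ Unit) ℝ)
    (hT : T = Matrix.fromBlocks Tp 0 0 (tlast • 1))
    (hA : IsUnit (1 + S0 * Tp).det) :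
    (1 + S * T).det =
      (1 + S0 * Tp).det *
        (1 + tlast + δ ⬝ᵥ (Tp * (1 + S0 * Tp)⁻¹).mulVec δ) := by
  set M := 1 + S0 * Tp with hM
  have h1 : (1 : Matrix (Fin p ⊕ Unit) (Fin p ⊕ Unit) ℝ) =
      Matrix.fromBlocks 1 0 0 1 := by
    simp [Matrix.fromBlocks_one]
  have hST : 1 + S * T = Matrix.fromBlocks (1 + (S0 + Matrix.vecMulVec δ δ) * Tp)
      (tlast • Matrix.replicateCol Unit δ) (Matrix.replicateRow Unit δ * Tp) ((1 + tlast) • 1) := by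
    rw [hS, hT, Matrix.fromBlocks_multiply, h1, Matrix.fromBlocks_add]
    congr 1 <;> simp [Matrix.mul_smul, add_smul]
  letI hD : Invertible ((1 + tlast) • (1 : Matrix Unit Unit ℝ)) :=
    ⟨(1 + tlast)⁻¹ • 1, by
      simp [Matrix.smul_mul, Matrix.mul_smul, smul_smul, inv_mul_cancel₀ htlast,
        mul_inv_cancel₀ htlast], by
      simp [Matrix.smul_mul, Matrix.mul_smul, smul_smul, inv_mul_cancel₀ htlast,
        mul_inv_cancel₀ htlast]⟩
  have hinvOf : ⅟((1 + tlast) • (1 : Matrix Unit Unit ℝ)) = (1 + tlast)⁻¹ • 1 := rfl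
  rw [hST, Matrix.det_fromBlocks₂₂, hinvOf]
  set X := Matrix.replicateCol Unit δ * (Matrix.replicateRow Unit δ * Tp) with hX
  have e1 : Matrix.vecMulVec δ δ * Tp = X := by
    rw [Matrix.vecMulVec_eq Unit, Matrix.mul_assoc]
  have e2 : (tlast • Matrix.replicateCol Unit δ) * ((1 + tlast)⁻¹ • (1 : Matrix Unit Unit ℝ)) *
      (Matrix.replicateRow Unit δ * Tp) = (tlast * (1 + tlast)⁻¹) • X := by
    simp only [Matrix.smul_mul, Matrix.mul_smul, Matrix.mul_one, smul_smul,
      Matrix.mul_assoc, hX, mul_comm tlast]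
  have hSchur : (1 + (S0 + Matrix.vecMulVec δ δ) * Tp) -
      (tlast • Matrix.replicateCol Unit δ) * ((1 + tlast)⁻¹ • (1 : Matrix Unit Unit ℝ)) *
        (Matrix.replicateRow Unit δ * Tp) =
      M + Matrix.replicateCol Unit ((1 + tlast)⁻¹ • δ) * Matrix.replicateRow Unit (Matrix.vecMul δ Tp) := by
    rw [add_mul, e1, e2]
    have h3 : Matrix.replicateCol Unit ((1 + tlast)⁻¹ • δ) * Matrix.replicateRow Unit (Matrix.vecMul δ Tp) =
        (1 + tlast)⁻¹ • X := by
      rw [Matrix.replicateRow_vecMul, Matrix.replicateCol_smul, Matrix.smul_mul, hX]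
    rw [h3]
    have hc : (1 : ℝ) - tlast * (1 + tlast)⁻¹ = (1 + tlast)⁻¹ := by
      field_simp
      ring
    have h4 : X - (tlast * (1 + tlast)⁻¹) • X = (1 + tlast)⁻¹ • X := by
      nth_rewrite 2 [← hc]
      rw [sub_smul, one_smul]
    rw [hM, ← h4]
    abel
  rw [hSchur, Matrix.det_add_replicateCol_mul_replicateRow hA]
  have hdetD : ((1 + tlast) • (1 : Matrix Unit Unit ℝ)).det = 1 + tlast := by
    simp
  have hsmall : (1 + Matrix.replicateRow Unit (Matrix.vecMul δ Tp) * M⁻¹ *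
      Matrix.replicateCol Unit ((1 + tlast)⁻¹ • δ)).det =
      1 + (1 + tlast)⁻¹ * (δ ⬝ᵥ (Tp * M⁻¹).mulVec δ) := by
    rw [Matrix.det_unique]
    simp only [Matrix.add_apply, Matrix.one_apply_eq]
    rw [Matrix.mul_assoc, ← Matrix.replicateCol_mulVec, Matrix.replicateRow_mul_replicateCol_apply]
    rw [Matrix.mulVec_smul, dotProduct_smul, ← Matrix.dotProduct_mulVec,
      Matrix.mulVec_mulVec, smul_eq_mul]
  rw [hdetD, hsmall]
  field_simp
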